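/- Let A be an m×m invertible real symmetric matrix and B an n×n invertible real symmetric matrix. Then there exists a real m×n matrix X such that the block matrix [[A, X],[Xᵀ, B]] has rank exactly max(m, n) + esd(A, B). -/

import Mathlib

open Matrix

/-- Number of positive eigenvalues (with multiplicity) of a real symmetric matrix. -/
noncomputable def posCount {n : ℕ} {A : Matrix (Fin n) (Fin n) ℝ}
    (hA : A.IsHermitian) : ℕ :=
  (Finset.univ.filter fun i => 0 < hA.eigenvalues i).card

/-- Number of negative eigenvalues (with multiplicity) of a real symmetric matrix. -/
noncomputable def negCount {n : ℕ} {A : Matrix (Fin n) (Fin n) ℝ}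
    (hA : A.IsHermitian) : ℕ :=
  (Finset.univ.filter fun i => hA.eigenvalues i < 0).card

/-- The eigenvalue sign disagreement `esd(A, B)`. -/
noncomputable def esd {m n : ℕ} {A : Matrix (Fin m) (Fin m) ℝ}
    {B : Matrix (Fin n) (Fin n) ℝ} (hA : A.IsHermitian) (hB : B.IsHermitian) : ℕ :=
  if 0 ≤ ((posCount hA : ℤ) - (posCount hB : ℤ)) * ((negCount hA : ℤ) - (negCount hB : ℤ))
  then 0
  else min ((posCount hA : ℤ) - (posCount hB : ℤ)).natAbs
    ((negCount hA : ℤ) - (negCount hB : ℤ)).natAbs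

namespace EsdProof

open Finset

private lemma rank_conj {ι : Type*} [Fintype ι] [DecidableEq ι] (P M : Matrix ι ι ℝ)
    (hP : IsUnit P.det) : (P * M * Pᵀ).rank = M.rank := by
  rw [Matrix.rank_mul_eq_left_of_isUnit_det _ _ (by rwa [Matrix.det_transpose]),
    Matrix.rank_mul_eq_right_of_isUnit_det _ _ hP]

private lemma core_rank {m n : ℕ} (a : Fin m → ℝ) (b : Fin n → ℝ)
    (ha : ∀ i, a i ≠ 0) (hb : ∀ j, b j ≠ 0)
    (matched : Fin n → Prop) [DecidablePred matched] (f : Fin n → Fin m)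
    (hinj : ∀ j j', matched j → matched j' → f j = f j' → j = j')
    (hsign : ∀ j, matched j → a (f j) = b j) :
    ∃ X : Matrix (Fin m) (Fin n) ℝ,
      (fromBlocks (diagonal a) X Xᵀ (diagonal b)).rank
        = m + (univ.filter fun j => ¬ matched j).card := by
  classical
  set F : Matrix (Fin n) (Fin m) ℝ :=
    Matrix.of fun j i => if matched j ∧ f j = i then (1:ℝ) else 0 with hF
  set b' : Fin n → ℝ := fun j => if matched j then 0 else b j with hb'
  refine ⟨diagonal a * Fᵀ, ?_⟩
  have key : F * diagonal a * Fᵀ = diagonal (fun j => if matched j then b j else 0) := by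
    ext j j'
    rw [Matrix.mul_apply]
    have hterm : ∀ i, (F * diagonal a) j i * Fᵀ i j'
        = if (matched j ∧ f j = i) ∧ matched j' ∧ f j' = i then a i else 0 := by
      intro i
      rw [Matrix.mul_diagonal, Matrix.transpose_apply]
      simp only [hF, Matrix.of_apply]
      by_cases hP : matched j ∧ f j = i <;> by_cases hQ : matched j' ∧ f j' = i <;>
        simp [hP, hQ]
    rw [Finset.sum_congr rfl fun i _ => hterm i]
    by_cases hj : matched j
    · by_cases hj' : matched j'
      · rcases eq_or_ne j j' with rfl | hne
        · simp [hj, Finset.sum_ite_eq, hsign j hj]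
        · rw [Matrix.diagonal_apply_ne _ hne]
          refine Finset.sum_eq_zero fun i _ => ?_
          rw [if_neg]
          rintro ⟨⟨_, h1⟩, _, h2⟩
          exact hne (hinj _ _ hj hj' (h1.trans h2.symm))
      · rw [Finset.sum_eq_zero fun i _ => if_neg (by tauto)]
        rcases eq_or_ne j j' with rfl | hne
        · exact absurd hj hj'
        · rw [Matrix.diagonal_apply_ne _ hne]
    · rw [Finset.sum_eq_zero fun i _ => if_neg (by tauto)]
      rcases eq_or_ne j j' with rfl | hne
      · rw [Matrix.diagonal_apply_eq]; simp [hj]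
      · rw [Matrix.diagonal_apply_ne _ hne]
  have h4 : F * diagonal a * Fᵀ + diagonal b' = diagonal b := by
    rw [key, Matrix.diagonal_add]
    refine congrArg Matrix.diagonal ?_
    funext i
    by_cases h : matched i <;> simp [hb', h]
  have hC : fromBlocks (diagonal a) (diagonal a * Fᵀ) (diagonal a * Fᵀ)ᵀ (diagonal b)
      = (fromBlocks 1 0 F 1 : Matrix (Fin m ⊕ Fin n) (Fin m ⊕ Fin n) ℝ)
        * diagonal (Sum.elim a b')
        * (fromBlocks 1 0 F 1 : Matrix (Fin m ⊕ Fin n) (Fin m ⊕ Fin n) ℝ)ᵀ := by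
    rw [← Matrix.fromBlocks_diagonal, Matrix.fromBlocks_transpose]
    simp only [Matrix.transpose_one, Matrix.transpose_zero]
    rw [Matrix.fromBlocks_multiply, Matrix.fromBlocks_multiply]
    simp only [Matrix.one_mul, Matrix.mul_one, Matrix.zero_mul, Matrix.mul_zero,
      add_zero, zero_add]
    rw [Matrix.transpose_mul, Matrix.transpose_transpose, Matrix.diagonal_transpose, h4]
  rw [hC, rank_conj _ _ (by
      rw [Matrix.det_fromBlocks_zero₁₂, Matrix.det_one, Matrix.det_one, mul_one]
      exact isUnit_one),
    Matrix.rank_diagonal]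
  have hcard : Fintype.card {x : Fin m ⊕ Fin n // Sum.elim a b' x ≠ 0}
      = Fintype.card {i : Fin m // a i ≠ 0} + Fintype.card {j : Fin n // b' j ≠ 0} := by
    rw [← Fintype.card_sum]
    exact Fintype.card_congr Equiv.subtypeSum
  rw [hcard]
  congr 1
  · simp [Fintype.card_subtype, Finset.filter_true_of_mem fun i _ => ha i]
  · rw [Fintype.card_subtype]
    congr 1
    apply Finset.filter_congr
    intro j _
    by_cases h : matched j <;> simp [hb', h, hb j]

private lemma real_conjT {ι κ : Type*} (A : Matrix ι κ ℝ) : Aᴴ = Aᵀ := by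
  ext i j; simp [Matrix.conjTranspose_apply]

private lemma sylvester {k : ℕ} {A : Matrix (Fin k) (Fin k) ℝ} (hA : A.IsHermitian)
    (hAu : IsUnit A) :
    ∃ (c : Fin k → ℝ) (P : Matrix (Fin k) (Fin k) ℝ), IsUnit P.det ∧
      A = P * diagonal c * Pᵀ ∧ (∀ i, c i = 1 ∨ c i = -1) ∧
      (univ.filter fun i => 0 < c i).card = posCount hA ∧
      (univ.filter fun i => c i < 0).card = negCount hA := by
  classical
  have hdet : A.det ≠ 0 :=
    isUnit_iff_ne_zero.mp ((Matrix.isUnit_iff_isUnit_det A).mp hAu)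
  have hev : ∀ i, hA.eigenvalues i ≠ 0 := by
    intro i hi
    apply hdet
    rw [hA.det_eq_prod_eigenvalues]
    exact Finset.prod_eq_zero (mem_univ i) (by simp [hi])
  set lam := hA.eigenvalues with hlam
  set c : Fin k → ℝ := fun i => if 0 < lam i then 1 else -1 with hc
  set s : Fin k → ℝ := fun i => Real.sqrt |lam i| with hs
  set U : Matrix (Fin k) (Fin k) ℝ := (hA.eigenvectorUnitary : Matrix (Fin k) (Fin k) ℝ) with hU
  have hsne : ∀ i, s i ≠ 0 := fun i =>
    Real.sqrt_ne_zero'.mpr (abs_pos.mpr (hev i))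
  have hUdet : IsUnit U.det := by
    have h1 : U * star U = 1 := Matrix.mem_unitaryGroup_iff.mp hA.eigenvectorUnitary.2
    have := congrArg Matrix.det h1
    rw [Matrix.det_mul, Matrix.det_one] at this
    exact IsUnit.of_mul_eq_one _ this
  refine ⟨c, U * diagonal s, ?_, ?_, ?_, ?_, ?_⟩
  · rw [Matrix.det_mul, Matrix.det_diagonal]
    exact hUdet.mul (isUnit_iff_ne_zero.mpr (Finset.prod_ne_zero_iff.mpr fun i _ => hsne i))
  · have hspec := hA.spectral_theorem
    have hco : (RCLike.ofReal ∘ hA.eigenvalues : Fin k → ℝ) = lam := by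
      funext i
      simp [RCLike.ofReal_real_eq_id, hlam]
    rw [hco] at hspec
    have hd : diagonal s * diagonal c * diagonal s = diagonal lam := by
      rw [Matrix.diagonal_mul_diagonal, Matrix.diagonal_mul_diagonal]
      refine congrArg Matrix.diagonal (funext fun i => ?_)
      by_cases h : 0 < lam i
      · have habs : |lam i| = lam i := abs_of_pos h
        simp only [hc, hs, if_pos h]
        rw [mul_one, Real.mul_self_sqrt (abs_nonneg _), habs]
      · have hlt : lam i < 0 := lt_of_le_of_ne (le_of_not_gt h) (hev i)
        have habs : |lam i| = -lam i := abs_of_neg hlt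
        simp only [hc, hs, if_neg h]
        rw [mul_neg_one, neg_mul, Real.mul_self_sqrt (abs_nonneg _), habs, neg_neg]
    rw [hspec, Unitary.conjStarAlgAut_apply, Matrix.star_eq_conjTranspose, real_conjT, ← hd,
      Matrix.transpose_mul, Matrix.diagonal_transpose]
    simp only [Matrix.mul_assoc]
    rfl
  · intro i
    by_cases h : 0 < lam i <;> simp [hc, h]
  · apply congrArg
    apply Finset.filter_congr
    intro i _
    by_cases h : 0 < lam i <;> simp [hc, h, ← hlam]
  · apply congrArg
    apply Finset.filter_congr
    intro i _
    by_cases h : 0 < lam i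
    · simp [hc, h, ← hlam, not_lt.mpr h.le, asymm h]
    · have hlt : lam i < 0 := lt_of_le_of_ne (le_of_not_gt h) (hev i)
      simp [hc, h, ← hlam, hlt]

private lemma arith (pa na pb nb : ℕ) (hn : pb + nb ≤ pa + na) :
    (pa + na) + ((pb + nb) - (min pa pb + min na nb)) =
      max (pa + na) (pb + nb) +
        (if 0 ≤ ((pa:ℤ) - pb) * ((na:ℤ) - nb) then 0
         else min ((pa:ℤ) - pb).natAbs ((na:ℤ) - nb).natAbs) := by
  rcases le_or_gt pb pa with h1 | h1 <;> rcases le_or_gt nb na with h2 | h2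
  · rw [if_pos (mul_nonneg (sub_nonneg.mpr (by exact_mod_cast h1))
      (sub_nonneg.mpr (by exact_mod_cast h2)))]
    omega
  · have hlt : pb < pa := by omega
    have hneg : ((pa:ℤ) - pb) * ((na:ℤ) - nb) < 0 :=
      mul_neg_of_pos_of_neg (sub_pos.mpr (by exact_mod_cast hlt))
        (sub_neg.mpr (by exact_mod_cast h2))
    rw [if_neg (not_le.mpr hneg)]
    omega
  · have hlt : nb < na := by omega
    have hneg : ((pa:ℤ) - pb) * ((na:ℤ) - nb) < 0 :=
      mul_neg_of_neg_of_pos (sub_neg.mpr (by exact_mod_cast h1))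
        (sub_pos.mpr (by exact_mod_cast hlt))
    rw [if_neg (not_le.mpr hneg)]
    omega
  · omega

private lemma esd_comm {m n : ℕ} {A : Matrix (Fin m) (Fin m) ℝ}
    {B : Matrix (Fin n) (Fin n) ℝ} (hA : A.IsHermitian) (hB : B.IsHermitian) :
    esd hA hB = esd hB hA := by
  unfold esd
  have h1 : ((posCount hA:ℤ) - posCount hB) * ((negCount hA:ℤ) - negCount hB)
      = ((posCount hB:ℤ) - posCount hA) * ((negCount hB:ℤ) - negCount hA) := by ring
  have h2 : ∀ x y : ℤ, (x - y).natAbs = (y - x).natAbs := fun x y => by omega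
  rw [h1, h2 (posCount hA:ℤ), h2 (negCount hA:ℤ)]

private theorem aux (m n : ℕ)
    (A : Matrix (Fin m) (Fin m) ℝ) (B : Matrix (Fin n) (Fin n) ℝ)
    (hA : A.IsHermitian) (hB : B.IsHermitian)
    (hAu : IsUnit A) (hBu : IsUnit B) (hmn : n ≤ m) :
    ∃ X : Matrix (Fin m) (Fin n) ℝ,
      (Matrix.fromBlocks A X Xᵀ B).rank = max m n + esd hA hB := by
  classical
  rcases Nat.eq_zero_or_pos m with rfl | hm
  · have hn : n = 0 := Nat.le_zero.mp hmn
    subst hn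
    refine ⟨0, ?_⟩
    have h0 : (fromBlocks A 0 (0:Matrix (Fin 0) (Fin 0) ℝ)ᵀ B).rank = 0 :=
      Nat.le_zero.mp ((Matrix.rank_le_card_height _).trans (by simp))
    rw [h0]
    simp [esd, posCount, negCount]
  · obtain ⟨cA, P, hPdet, hAeq, hcA, hcApos, hcAneg⟩ := sylvester hA hAu
    obtain ⟨cB, Q, hQdet, hBeq, hcB, hcBpos, hcBneg⟩ := sylvester hB hBu
    have haz : ∀ i, cA i ≠ 0 := fun i => by rcases hcA i with h | h <;> simp [h]
    have hbz : ∀ j, cB j ≠ 0 := fun j => by rcases hcB j with h | h <;> simp [h]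
    have hposA : ∀ i, 0 < cA i → cA i = 1 := fun i hi =>
      (hcA i).resolve_right (fun h => by rw [h] at hi; linarith)
    have hnegA : ∀ i, cA i < 0 → cA i = -1 := fun i hi =>
      (hcA i).resolve_left (fun h => by rw [h] at hi; linarith)
    have hposB : ∀ j, 0 < cB j → cB j = 1 := fun j hj =>
      (hcB j).resolve_right (fun h => by rw [h] at hj; linarith)
    have hnegB : ∀ j, cB j < 0 → cB j = -1 := fun j hj =>
      (hcB j).resolve_left (fun h => by rw [h] at hj; linarith)
    have hpa : posCount hA + negCount hA = m := by
      rw [← hcApos, ← hcAneg]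
      have heq : (univ.filter fun i => cA i < 0) = univ.filter fun i => ¬ 0 < cA i := by
        apply Finset.filter_congr
        intro i _
        rcases hcA i with h | h <;> norm_num [h]
      rw [heq, Finset.card_filter_add_card_filter_not, Finset.card_univ,
        Fintype.card_fin]
    have hpb : posCount hB + negCount hB = n := by
      rw [← hcBpos, ← hcBneg]
      have heq : (univ.filter fun j => cB j < 0) = univ.filter fun j => ¬ 0 < cB j := by
        apply Finset.filter_congr
        intro j _
        rcases hcB j with h | h <;> norm_num [h]
      rw [heq, Finset.card_filter_add_card_filter_not, Finset.card_univ,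
        Fintype.card_fin]
    -- choose matched subsets
    obtain ⟨Pb', hPb'sub, hPb'card⟩ := Finset.exists_subset_card_eq
      (show min (posCount hA) (posCount hB) ≤ (univ.filter fun j => 0 < cB j).card by
        rw [hcBpos]; exact min_le_right _ _)
    obtain ⟨Pa', hPa'sub, hPa'card⟩ := Finset.exists_subset_card_eq
      (show min (posCount hA) (posCount hB) ≤ (univ.filter fun i => 0 < cA i).card by
        rw [hcApos]; exact min_le_left _ _)
    obtain ⟨Nb', hNb'sub, hNb'card⟩ := Finset.exists_subset_card_eq
      (show min (negCount hA) (negCount hB) ≤ (univ.filter fun j => cB j < 0).card by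
        rw [hcBneg]; exact min_le_right _ _)
    obtain ⟨Na', hNa'sub, hNa'card⟩ := Finset.exists_subset_card_eq
      (show min (negCount hA) (negCount hB) ≤ (univ.filter fun i => cA i < 0).card by
        rw [hcAneg]; exact min_le_left _ _)
    have hPaPos : ∀ i ∈ Pa', 0 < cA i := fun i hi => (Finset.mem_filter.mp (hPa'sub hi)).2
    have hNaNeg : ∀ i ∈ Na', cA i < 0 := fun i hi => (Finset.mem_filter.mp (hNa'sub hi)).2
    have hPbPos : ∀ j ∈ Pb', 0 < cB j := fun j hj => (Finset.mem_filter.mp (hPb'sub hj)).2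
    have hNbNeg : ∀ j ∈ Nb', cB j < 0 := fun j hj => (Finset.mem_filter.mp (hNb'sub hj)).2
    have e1 : {x // x ∈ Pb'} ≃ {x // x ∈ Pa'} :=
      Finset.equivOfCardEq (by rw [hPb'card, hPa'card])
    have e2 : {x // x ∈ Nb'} ≃ {x // x ∈ Na'} :=
      Finset.equivOfCardEq (by rw [hNb'card, hNa'card])
    have hdisj : Disjoint Pb' Nb' := by
      rw [Finset.disjoint_left]
      intro j hj1 hj2
      exact absurd (hPbPos j hj1) (asymm (hNbNeg j hj2))
    set matched : Fin n → Prop := fun j => j ∈ Pb' ∨ j ∈ Nb' with hmatched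
    set f : Fin n → Fin m := fun j =>
      if h : j ∈ Pb' then (e1 ⟨j, h⟩ : Fin m)
      else if h2 : j ∈ Nb' then (e2 ⟨j, h2⟩ : Fin m)
      else ⟨0, hm⟩ with hf
    have hfP : ∀ j (h : j ∈ Pb'), f j = (e1 ⟨j, h⟩ : Fin m) := fun j h => by
      simp [hf, dif_pos h]
    have hfN : ∀ j (h : j ∈ Nb'), f j = (e2 ⟨j, h⟩ : Fin m) := fun j h => by
      have h1 : j ∉ Pb' := fun hc => Finset.disjoint_left.mp hdisj hc h
      simp [hf, dif_neg h1, dif_pos h]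
    have hinj : ∀ j j', matched j → matched j' → f j = f j' → j = j' := by
      intro j j' hj hj' heq
      rcases hj with h1 | h1 <;> rcases hj' with h1' | h1'
      · rw [hfP j h1, hfP j' h1'] at heq
        exact congrArg Subtype.val (e1.injective (Subtype.ext heq))
      · rw [hfP j h1, hfN j' h1'] at heq
        have hp : 0 < cA ((e1 ⟨j, h1⟩ : Fin m)) := hPaPos _ (e1 ⟨j, h1⟩).2
        have hn : cA ((e2 ⟨j', h1'⟩ : Fin m)) < 0 := hNaNeg _ (e2 ⟨j', h1'⟩).2
        rw [heq] at hp
        exact absurd hp (asymm hn)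
      · rw [hfN j h1, hfP j' h1'] at heq
        have hp : 0 < cA ((e1 ⟨j', h1'⟩ : Fin m)) := hPaPos _ (e1 ⟨j', h1'⟩).2
        have hn : cA ((e2 ⟨j, h1⟩ : Fin m)) < 0 := hNaNeg _ (e2 ⟨j, h1⟩).2
        rw [heq] at hn
        exact absurd hp (asymm hn)
      · rw [hfN j h1, hfN j' h1'] at heq
        exact congrArg Subtype.val (e2.injective (Subtype.ext heq))
    have hsign : ∀ j, matched j → cA (f j) = cB j := by
      intro j hj
      rcases hj with h1 | h1
      · rw [hfP j h1, hposA _ (hPaPos _ (e1 ⟨j, h1⟩).2), hposB _ (hPbPos _ h1)]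
      · rw [hfN j h1, hnegA _ (hNaNeg _ (e2 ⟨j, h1⟩).2), hnegB _ (hNbNeg _ h1)]
    obtain ⟨X₀, hX₀⟩ := core_rank cA cB haz hbz matched f hinj hsign
    refine ⟨P * X₀ * Qᵀ, ?_⟩
    have hblock : fromBlocks A (P * X₀ * Qᵀ) (P * X₀ * Qᵀ)ᵀ B
        = (fromBlocks P 0 0 Q) * fromBlocks (diagonal cA) X₀ X₀ᵀ (diagonal cB)
          * (fromBlocks P 0 0 Q)ᵀ := by
      rw [Matrix.fromBlocks_transpose, Matrix.transpose_zero, Matrix.fromBlocks_multiply,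
        Matrix.fromBlocks_multiply]
      simp only [Matrix.zero_mul, Matrix.mul_zero, add_zero, zero_add]
      rw [hAeq, hBeq]
      simp [Matrix.transpose_mul, Matrix.mul_assoc]
    have hRdet : IsUnit ((fromBlocks P 0 0 Q :
        Matrix (Fin m ⊕ Fin n) (Fin m ⊕ Fin n) ℝ)).det := by
      rw [Matrix.det_fromBlocks_zero₁₂]
      exact hPdet.mul hQdet
    rw [hblock, rank_conj _ _ hRdet, hX₀]
    -- counting
    have hunion : (univ.filter fun j => matched j) = Pb' ∪ Nb' := by
      ext j
      simp [hmatched, Finset.mem_union]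
    have hmcard : (univ.filter fun j => matched j).card
        = min (posCount hA) (posCount hB) + min (negCount hA) (negCount hB) := by
      rw [hunion, Finset.card_union_of_disjoint hdisj, hPb'card, hNb'card]
    have hsplit := Finset.card_filter_add_card_filter_not
      (s := (univ : Finset (Fin n))) (p := matched)
    rw [Finset.card_univ, Fintype.card_fin, hmcard] at hsplit
    have hcard : (univ.filter fun j => ¬ matched j).card
        = n - (min (posCount hA) (posCount hB) + min (negCount hA) (negCount hB)) := by
      omega
    rw [hcard, max_eq_left hmn]
    have harith := arith (posCount hA) (negCount hA) (posCount hB) (negCount hB) (by omega)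
    unfold esd
    rw [hpa, hpb, max_eq_left hmn] at harith
    exact harith

end EsdProof

/-- Some completion `[[A, X], [Xᵀ, B]]` of the pattern of two disjoint cliques
has rank exactly `max m n + esd(A, B)`. -/
theorem exists_block_rank_eq_max_add_esd (m n : ℕ)
    (A : Matrix (Fin m) (Fin m) ℝ) (B : Matrix (Fin n) (Fin n) ℝ)
    (hA : A.IsHermitian) (hB : B.IsHermitian)
    (hAu : IsUnit A) (hBu : IsUnit B) :
    ∃ X : Matrix (Fin m) (Fin n) ℝ,
      (Matrix.fromBlocks A X Xᵀ B).rank = max m n + esd hA hB := by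
  rcases le_total n m with hmn | hmn
  · exact EsdProof.aux m n A B hA hB hAu hBu hmn
  · obtain ⟨Y, hY⟩ := EsdProof.aux n m B A hB hA hBu hAu hmn
    refine ⟨Yᵀ, ?_⟩
    have hsub : Matrix.fromBlocks A Yᵀ Yᵀᵀ B
        = (Matrix.fromBlocks B Y Yᵀ A).submatrix (Equiv.sumComm (Fin m) (Fin n))
            (Equiv.sumComm (Fin m) (Fin n)) := by
      ext (i | j) (i' | j') <;> rfl
    rw [hsub, Matrix.rank_submatrix, hY, EsdProof.esd_comm hB hA, max_comm]
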